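/- Let (Ω, 𝔽, P) be a probability space, E a measurable space, q a probability measure on E, and (X_i)_{i ∈ ℕ} an i.i.d. sequence of E-valued random variables on Ω, each with distribution q. Let f, g : E → ℝ be measurable with g ≥ 0 everywhere, such that g and f·g are q-integrable and ∫ g dq > 0. Then P-almost surely, (Σ_{i=0}^{n−1} f(X_i)·g(X_i)) / (Σ_{i=0}^{n−1} g(X_i)) converges to (∫ f·g dq)/(∫ g dq) as n → ∞. -/

import Mathlib

open MeasureTheory ProbabilityTheory Filter

/-- consistency of the self-normalized Monte Carlo estimator:
for an i.i.d. sequence `(X_i)` with common distribution `q`, and measurable `f, g`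
with `g ≥ 0`, `g` and `f·g` `q`-integrable and `∫ g dq > 0`, almost surely
`(Σ_{i<n} f(X_i)·g(X_i)) / (Σ_{i<n} g(X_i)) → (∫ f·g dq)/(∫ g dq)`. -/
theorem selfNormalized_monteCarlo_consistency
    {Ω E : Type*} [MeasurableSpace Ω] [MeasurableSpace E]
    (P : Measure Ω) [IsProbabilityMeasure P]
    (q : Measure E) [IsProbabilityMeasure q]
    (X : ℕ → Ω → E) (hXmeas : ∀ i, Measurable (X i))
    (hindep : iIndepFun X P)
    (hdist : ∀ i, Measure.map (X i) P = q)
    (f g : E → ℝ) (hf : Measurable f) (hg : Measurable g)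
    (hgnn : ∀ x, 0 ≤ g x)
    (hgint : Integrable g q) (hfgint : Integrable (fun x => f x * g x) q)
    (hgpos : 0 < ∫ x, g x ∂q) :
    ∀ᵐ ω ∂P, Tendsto
      (fun n => (∑ i ∈ Finset.range n, f (X i ω) * g (X i ω)) /
        (∑ i ∈ Finset.range n, g (X i ω)))
      atTop (nhds ((∫ x, f x * g x ∂q) / (∫ x, g x ∂q))) := by
  set h : E → ℝ := fun x => f x * g x with hh
  have hhm : Measurable h := hf.mul hg
  have hident : ∀ i, IdentDistrib (X i) (X 0) P P := fun i =>
    ⟨(hXmeas i).aemeasurable, (hXmeas 0).aemeasurable, by rw [hdist i, hdist 0]⟩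
  -- integrability of compositions
  have hint_comp : ∀ (u : E → ℝ), Measurable u → Integrable u q →
      Integrable (fun ω => u (X 0 ω)) P := by
    intro u hu hui
    have : Integrable u (Measure.map (X 0) P) := by rw [hdist 0]; exact hui
    exact (integrable_map_measure hu.aestronglyMeasurable (hXmeas 0).aemeasurable).mp this
  have hE : ∀ (u : E → ℝ), Measurable u →
      (∫ ω, u (X 0 ω) ∂P) = ∫ x, u x ∂q := by
    intro u hu
    rw [← integral_map (hXmeas 0).aemeasurable hu.aestronglyMeasurable, hdist 0]
  have slln : ∀ (u : E → ℝ), Measurable u → Integrable u q →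
      ∀ᵐ ω ∂P, Tendsto (fun n : ℕ => (∑ i ∈ Finset.range n, u (X i ω)) / n)
        atTop (nhds (∫ x, u x ∂q)) := by
    intro u hu hui
    have := strong_law_ae_real (fun i ω => u (X i ω))
      (hint_comp u hu hui)
      (fun i j hij => (hindep.indepFun hij).comp hu hu)
      (fun i => (hident i).comp hu)
    rw [hE u hu] at this
    exact this
  filter_upwards [slln h hhm hfgint, slln g hg hgint] with ω h1 h2
  have hlim := h1.div h2 (ne_of_gt hgpos)
  refine hlim.congr' ?_
  filter_upwards [eventually_ge_atTop 1] with n hn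
  have hn0 : (n : ℝ) ≠ 0 := Nat.cast_ne_zero.mpr (by omega)
  exact div_div_div_cancel_right₀ hn0 _ _
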